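/- Let I = [α, β] be a compact interval in ℝ with α < β, let Q and R be real polynomials, and let ε > 0. Then there exists a linear game (a polynomial game in which every payoff entry is a polynomial of degree at most 1 in Z) whose value function agrees with z ↦ Q(z)/max{R(z), ε} on I. -/

import Mathlib

open Polynomial

/-- The value of a finite two-player zero-sum matrix game with payoff matrix `G`:
`sup` over mixed strategies of Player 1 of `inf` over mixed strategies of Player 2
of the expected payoff. -/
noncomputable def matrixValue {A B : Type} [Fintype A] [Fintype B] (G : A → B → ℝ) : ℝ :=
  ⨆ x : stdSimplex ℝ A, ⨅ y : stdSimplex ℝ B, ∑ a : A, ∑ b : B, x.1 a * G a b * y.1 b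

section Cert
variable {A B : Type} [Fintype A] [Fintype B]

def Cert (G : A → B → ℝ) (v : ℝ) : Prop :=
  (∃ x ∈ stdSimplex ℝ A, ∀ b, v ≤ ∑ a, x a * G a b) ∧
  (∃ y ∈ stdSimplex ℝ B, ∀ a, ∑ b, G a b * y b ≤ v)

lemma simplex_nonneg {x : A → ℝ} (hx : x ∈ stdSimplex ℝ A) (a : A) : 0 ≤ x a := hx.1 a
lemma simplex_sum {x : A → ℝ} (hx : x ∈ stdSimplex ℝ A) : ∑ a, x a = 1 := hx.2
lemma simplex_le_one {x : A → ℝ} (hx : x ∈ stdSimplex ℝ A) (a : A) : x a ≤ 1 := by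
  have := Finset.single_le_sum (f := x) (fun i _ => hx.1 i) (Finset.mem_univ a)
  rw [hx.2] at this; exact this

instance simplex_nonempty [Nonempty A] : Nonempty (stdSimplex ℝ A) := by
  obtain ⟨a⟩ := ‹Nonempty A›
  haveI := Classical.decEq A
  exact ⟨⟨_, ite_eq_mem_stdSimplex ℝ a⟩⟩

lemma payoff_abs_le (G : A → B → ℝ) {x : A → ℝ} {y : B → ℝ}
    (hx : x ∈ stdSimplex ℝ A) (hy : y ∈ stdSimplex ℝ B) :
    |∑ a : A, ∑ b : B, x a * G a b * y b| ≤ ∑ a : A, ∑ b : B, |G a b| := by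
  calc |∑ a : A, ∑ b : B, x a * G a b * y b| ≤ ∑ a : A, |∑ b : B, x a * G a b * y b| :=
        Finset.abs_sum_le_sum_abs _ _
    _ ≤ ∑ a : A, ∑ b : B, |x a * G a b * y b| :=
        Finset.sum_le_sum fun a _ => Finset.abs_sum_le_sum_abs _ _
    _ ≤ ∑ a : A, ∑ b : B, |G a b| := by
        refine Finset.sum_le_sum fun a _ => Finset.sum_le_sum fun b _ => ?_
        rw [abs_mul, abs_mul, abs_of_nonneg (hx.1 a), abs_of_nonneg (hy.1 b)]
        calc x a * |G a b| * y b ≤ 1 * |G a b| * 1 := by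
              apply mul_le_mul (mul_le_mul (simplex_le_one hx a) le_rfl (abs_nonneg _) zero_le_one)
                (simplex_le_one hy b) (hy.1 b) (by positivity)
          _ = |G a b| := by ring

lemma matrixValue_eq_of_cert [Nonempty A] [Nonempty B] {G : A → B → ℝ} {v : ℝ}
    (h : Cert G v) : matrixValue G = v := by
  obtain ⟨⟨x, hx, hxg⟩, ⟨y, hy, hyg⟩⟩ := h
  set C : ℝ := ∑ a : A, ∑ b : B, |G a b| with hC
  have payoff_swap : ∀ (x' : A → ℝ) (y' : B → ℝ),
      ∑ a : A, ∑ b : B, x' a * G a b * y' b = ∑ b : B, (∑ a : A, x' a * G a b) * y' b := by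
    intro x' y'
    rw [Finset.sum_comm]
    exact Finset.sum_congr rfl fun b _ => by rw [Finset.sum_mul]
  have hbdd : ∀ x' : stdSimplex ℝ A, BddBelow (Set.range fun y' : stdSimplex ℝ B =>
      ∑ a : A, ∑ b : B, x'.1 a * G a b * y'.1 b) := by
    intro x'
    refine ⟨-C, ?_⟩
    rintro r ⟨y', rfl⟩
    have := payoff_abs_le G x'.2 y'.2
    linarith [neg_abs_le (∑ a : A, ∑ b : B, x'.1 a * G a b * y'.1 b)]
  have hub : ∀ x' : stdSimplex ℝ A,
      (⨅ y' : stdSimplex ℝ B, ∑ a : A, ∑ b : B, x'.1 a * G a b * y'.1 b) ≤ v := by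
    intro x'
    refine le_trans (ciInf_le (hbdd x') ⟨y, hy⟩) ?_
    have : ∑ a : A, ∑ b : B, x'.1 a * G a b * y b
        = ∑ a : A, x'.1 a * ∑ b : B, G a b * y b := by
      refine Finset.sum_congr rfl fun a _ => ?_
      rw [Finset.mul_sum]
      exact Finset.sum_congr rfl fun b _ => by ring
    rw [this]
    calc ∑ a : A, x'.1 a * ∑ b : B, G a b * y b ≤ ∑ a : A, x'.1 a * v :=
          Finset.sum_le_sum fun a _ => mul_le_mul_of_nonneg_left (hyg a) (x'.2.1 a)
      _ = v := by rw [← Finset.sum_mul, simplex_sum x'.2, one_mul]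
  apply le_antisymm
  · exact ciSup_le hub
  · refine le_trans ?_ (le_ciSup ⟨v, by rintro r ⟨x', rfl⟩; exact hub x'⟩ (⟨x, hx⟩ : stdSimplex ℝ A))
    refine le_ciInf fun y' => ?_
    rw [payoff_swap]
    calc v = ∑ b : B, v * y'.1 b := by rw [← Finset.mul_sum, simplex_sum y'.2, mul_one]
      _ ≤ ∑ b : B, (∑ a : A, x a * G a b) * y'.1 b :=
          Finset.sum_le_sum fun b _ => mul_le_mul_of_nonneg_right (hxg b) (y'.2.1 b)

end Cert

def IsVal (I : Set ℝ) (v : ℝ → ℝ) : Prop :=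
  ∃ (A B : Type) (iA : Fintype A) (iB : Fintype B), Nonempty A ∧ Nonempty B ∧
    ∃ G : A → B → Polynomial ℝ, (∀ a b, (G a b).degree ≤ 1) ∧
      ∀ z ∈ I, @Cert A B iA iB (fun a b => (G a b).eval z) (v z)

lemma IsVal.congr {I : Set ℝ} {v w : ℝ → ℝ} (h : IsVal I v) (hvw : ∀ z ∈ I, v z = w z) :
    IsVal I w := by
  obtain ⟨A, B, iA, iB, hA, hB, G, hdeg, hval⟩ := h
  exact ⟨A, B, iA, iB, hA, hB, G, hdeg, fun z hz => (hvw z hz) ▸ hval z hz⟩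

lemma isVal_linear (I : Set ℝ) (c d : ℝ) : IsVal I (fun z => c + d * z) := by
  refine ⟨PUnit, PUnit, inferInstance, inferInstance, ⟨PUnit.unit⟩, ⟨PUnit.unit⟩,
    fun _ _ => C c + C d * X, fun _ _ => ?_, fun z hz => ?_⟩
  · calc (C c + C d * X).degree ≤ max (C c).degree (C d * X).degree := Polynomial.degree_add_le _ _
      _ ≤ 1 := by
        apply max_le (le_trans (Polynomial.degree_C_le) (by norm_num))
        calc (C d * X).degree ≤ (C d).degree + (X : Polynomial ℝ).degree :=
              Polynomial.degree_mul_le _ _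
          _ ≤ 0 + 1 := add_le_add Polynomial.degree_C_le Polynomial.degree_X_le
          _ = 1 := by norm_num
  · constructor
    · exact ⟨fun _ => 1, ⟨fun _ => zero_le_one, by simp⟩, fun b => by simp⟩
    · exact ⟨fun _ => 1, ⟨fun _ => zero_le_one, by simp⟩, fun a => by simp⟩

lemma isVal_const (I : Set ℝ) (c : ℝ) : IsVal I (fun _ => c) := by
  simpa using isVal_linear I c 0

lemma IsVal.neg {I : Set ℝ} {v : ℝ → ℝ} (h : IsVal I v) : IsVal I (fun z => -v z) := by
  obtain ⟨A, B, iA, iB, hA, hB, G, hdeg, hval⟩ := h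
  refine ⟨B, A, iB, iA, hB, hA, fun b a => -(G a b), fun b a => ?_, fun z hz => ?_⟩
  · rw [Polynomial.degree_neg]; exact hdeg a b
  · obtain ⟨⟨x, hx, hxg⟩, ⟨y, hy, hyg⟩⟩ := hval z hz
    constructor
    · refine ⟨y, hy, fun a => ?_⟩
      have := hyg a
      simp only [Polynomial.eval_neg]
      have : ∑ b, y b * -(G a b).eval z = -∑ b, (G a b).eval z * y b := by
        rw [← Finset.sum_neg_distrib]; exact Finset.sum_congr rfl fun b _ => by ring
      rw [this]
      linarith [hyg a]
    · refine ⟨x, hx, fun b => ?_⟩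
      simp only [Polynomial.eval_neg]
      have : ∑ a, -(G a b).eval z * x a = -∑ a, x a * (G a b).eval z := by
        rw [← Finset.sum_neg_distrib]; exact Finset.sum_congr rfl fun a _ => by ring
      rw [this]
      linarith [hxg b]

lemma IsVal.add {I : Set ℝ} {v w : ℝ → ℝ} (hv : IsVal I v) (hw : IsVal I w) :
    IsVal I (fun z => v z + w z) := by
  obtain ⟨A1, B1, iA1, iB1, hA1, hB1, G1, hdeg1, hval1⟩ := hv
  obtain ⟨A2, B2, iA2, iB2, hA2, hB2, G2, hdeg2, hval2⟩ := hw
  refine ⟨A1 × A2, B1 × B2, instFintypeProd A1 A2, instFintypeProd B1 B2,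
    ⟨(hA1.some, hA2.some)⟩, ⟨(hB1.some, hB2.some)⟩,
    fun a b => G1 a.1 b.1 + G2 a.2 b.2, fun a b => ?_, fun z hz => ?_⟩
  · exact le_trans (Polynomial.degree_add_le _ _) (max_le (hdeg1 _ _) (hdeg2 _ _))
  · obtain ⟨⟨x1, hx1, hxg1⟩, ⟨y1, hy1, hyg1⟩⟩ := hval1 z hz
    obtain ⟨⟨x2, hx2, hxg2⟩, ⟨y2, hy2, hyg2⟩⟩ := hval2 z hz
    have hxmem : (fun a : A1 × A2 => x1 a.1 * x2 a.2) ∈ stdSimplex ℝ (A1 × A2) := by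
      constructor
      · exact fun a => mul_nonneg (hx1.1 a.1) (hx2.1 a.2)
      · rw [Fintype.sum_prod_type, ← Finset.sum_mul_sum, simplex_sum hx1, simplex_sum hx2,
          one_mul]
    have hymem : (fun b : B1 × B2 => y1 b.1 * y2 b.2) ∈ stdSimplex ℝ (B1 × B2) := by
      constructor
      · exact fun b => mul_nonneg (hy1.1 b.1) (hy2.1 b.2)
      · rw [Fintype.sum_prod_type, ← Finset.sum_mul_sum, simplex_sum hy1, simplex_sum hy2,
          one_mul]
    constructor
    · refine ⟨_, hxmem, fun b => ?_⟩
      have key : ∑ a : A1 × A2, x1 a.1 * x2 a.2 * ((G1 a.1 b.1).eval z + (G2 a.2 b.2).eval z)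
          = (∑ a1, x1 a1 * (G1 a1 b.1).eval z) * (∑ a2, x2 a2)
            + (∑ a1, x1 a1) * (∑ a2, x2 a2 * (G2 a2 b.2).eval z) := by
        rw [Fintype.sum_prod_type, Finset.sum_mul_sum, Finset.sum_mul_sum, ← Finset.sum_add_distrib]
        refine Finset.sum_congr rfl fun a1 _ => ?_
        rw [← Finset.sum_add_distrib]
        exact Finset.sum_congr rfl fun a2 _ => by ring
      simp only [Polynomial.eval_add]
      rw [key, simplex_sum hx1, simplex_sum hx2, mul_one, one_mul]
      exact add_le_add (hxg1 b.1) (hxg2 b.2)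
    · refine ⟨_, hymem, fun a => ?_⟩
      have key : ∑ b : B1 × B2, ((G1 a.1 b.1).eval z + (G2 a.2 b.2).eval z) * (y1 b.1 * y2 b.2)
          = (∑ b1, (G1 a.1 b1).eval z * y1 b1) * (∑ b2, y2 b2)
            + (∑ b1, y1 b1) * (∑ b2, (G2 a.2 b2).eval z * y2 b2) := by
        rw [Fintype.sum_prod_type, Finset.sum_mul_sum, Finset.sum_mul_sum, ← Finset.sum_add_distrib]
        refine Finset.sum_congr rfl fun b1 _ => ?_
        rw [← Finset.sum_add_distrib]
        exact Finset.sum_congr rfl fun b2 _ => by ring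
      simp only [Polynomial.eval_add]
      rw [key, simplex_sum hy1, simplex_sum hy2, mul_one, one_mul]
      exact add_le_add (hyg1 a.1) (hyg2 a.2)

lemma IsVal.smul {I : Set ℝ} {v : ℝ → ℝ} (h : IsVal I v) {c : ℝ} (hc : 0 ≤ c) :
    IsVal I (fun z => c * v z) := by
  obtain ⟨A, B, iA, iB, hA, hB, G, hdeg, hval⟩ := h
  refine ⟨A, B, iA, iB, hA, hB, fun a b => C c * G a b, fun a b => ?_, fun z hz => ?_⟩
  · calc (C c * G a b).degree ≤ (C c).degree + (G a b).degree := Polynomial.degree_mul_le _ _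
      _ ≤ 0 + 1 := add_le_add Polynomial.degree_C_le (hdeg a b)
      _ = 1 := by norm_num
  · obtain ⟨⟨x, hx, hxg⟩, ⟨y, hy, hyg⟩⟩ := hval z hz
    constructor
    · refine ⟨x, hx, fun b => ?_⟩
      simp only [Polynomial.eval_mul, Polynomial.eval_C]
      have : ∑ a, x a * (c * (G a b).eval z) = c * ∑ a, x a * (G a b).eval z := by
        rw [Finset.mul_sum]; exact Finset.sum_congr rfl fun a _ => by ring
      rw [this]
      exact mul_le_mul_of_nonneg_left (hxg b) hc
    · refine ⟨y, hy, fun a => ?_⟩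
      simp only [Polynomial.eval_mul, Polynomial.eval_C]
      have : ∑ b, c * (G a b).eval z * y b = c * ∑ b, (G a b).eval z * y b := by
        rw [Finset.mul_sum]; exact Finset.sum_congr rfl fun b _ => by ring
      rw [this]
      exact mul_le_mul_of_nonneg_left (hyg a) hc

lemma IsVal.min {I : Set ℝ} {v w : ℝ → ℝ} (hv : IsVal I v) (hw : IsVal I w) :
    IsVal I (fun z => min (v z) (w z)) := by
  obtain ⟨A1, B1, iA1, iB1, hA1, hB1, G1, hdeg1, hval1⟩ := hv
  obtain ⟨A2, B2, iA2, iB2, hA2, hB2, G2, hdeg2, hval2⟩ := hw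
  refine ⟨A1 × A2, B1 ⊕ B2, instFintypeProd A1 A2, instFintypeSum B1 B2,
    ⟨(hA1.some, hA2.some)⟩, ⟨Sum.inl hB1.some⟩,
    fun a b => Sum.elim (fun b1 => G1 a.1 b1) (fun b2 => G2 a.2 b2) b,
    fun a b => by cases b with
      | inl b1 => exact hdeg1 _ _
      | inr b2 => exact hdeg2 _ _, fun z hz => ?_⟩
  obtain ⟨⟨x1, hx1, hxg1⟩, ⟨y1, hy1, hyg1⟩⟩ := hval1 z hz
  obtain ⟨⟨x2, hx2, hxg2⟩, ⟨y2, hy2, hyg2⟩⟩ := hval2 z hz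
  have hxmem : (fun a : A1 × A2 => x1 a.1 * x2 a.2) ∈ stdSimplex ℝ (A1 × A2) := by
    constructor
    · exact fun a => mul_nonneg (hx1.1 a.1) (hx2.1 a.2)
    · rw [Fintype.sum_prod_type, ← Finset.sum_mul_sum, simplex_sum hx1, simplex_sum hx2, one_mul]
  constructor
  · refine ⟨_, hxmem, fun b => ?_⟩
    cases b with
    | inl b1 =>
      have key : ∑ a : A1 × A2, x1 a.1 * x2 a.2 * (G1 a.1 b1).eval z
          = (∑ a1, x1 a1 * (G1 a1 b1).eval z) * (∑ a2, x2 a2) := by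
        rw [Fintype.sum_prod_type, Finset.sum_mul_sum]
        refine Finset.sum_congr rfl fun a1 _ => Finset.sum_congr rfl fun a2 _ => by ring
      simp only [Sum.elim_inl]
      rw [key, simplex_sum hx2, mul_one]
      exact le_trans (min_le_left _ _) (hxg1 b1)
    | inr b2 =>
      have key : ∑ a : A1 × A2, x1 a.1 * x2 a.2 * (G2 a.2 b2).eval z
          = (∑ a1, x1 a1) * (∑ a2, x2 a2 * (G2 a2 b2).eval z) := by
        rw [Fintype.sum_prod_type, Finset.sum_mul_sum]
        refine Finset.sum_congr rfl fun a1 _ => Finset.sum_congr rfl fun a2 _ => by ring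
      simp only [Sum.elim_inr]
      rw [key, simplex_sum hx1, one_mul]
      exact le_trans (min_le_right _ _) (hxg2 b2)
  · rcases le_total (v z) (w z) with hle | hle
    · refine ⟨Sum.elim y1 (fun _ => 0), ⟨fun b => ?_, ?_⟩, fun a => ?_⟩
      · cases b with
        | inl b1 => exact hy1.1 b1
        | inr b2 => exact le_rfl
      · rw [Fintype.sum_sum_type]; simp [simplex_sum hy1]
      · rw [Fintype.sum_sum_type]
        simp only [Sum.elim_inl, Sum.elim_inr, mul_zero, Finset.sum_const_zero, add_zero]
        rw [min_eq_left hle]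
        exact hyg1 a.1
    · refine ⟨Sum.elim (fun _ => 0) y2, ⟨fun b => ?_, ?_⟩, fun a => ?_⟩
      · cases b with
        | inl b1 => exact le_rfl
        | inr b2 => exact hy2.1 b2
      · rw [Fintype.sum_sum_type]; simp [simplex_sum hy2]
      · rw [Fintype.sum_sum_type]
        simp only [Sum.elim_inl, Sum.elim_inr, mul_zero, Finset.sum_const_zero, zero_add]
        rw [min_eq_right hle]
        exact hyg2 a.2

lemma IsVal.max {I : Set ℝ} {v w : ℝ → ℝ} (hv : IsVal I v) (hw : IsVal I w) :
    IsVal I (fun z => max (v z) (w z)) := by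
  have := (hv.neg.min hw.neg).neg
  exact this.congr fun z hz => by rw [min_def, max_def]; split <;> split <;> simp_all <;> linarith

section PairSums
variable {A : Type} [Fintype A] {x : A → ℝ} (f g : A → ℝ)

lemma sum_pair_fst (hx : ∑ a, x a = 1) :
    ∑ p : A × A, x p.1 * x p.2 * f p.1 = ∑ a, x a * f a := by
  rw [Fintype.sum_prod_type]
  refine Finset.sum_congr rfl fun a _ => ?_
  have : ∀ a', x a * x a' * f a = (x a * f a) * x a' := fun a' => by ring
  simp_rw [this]
  rw [← Finset.mul_sum, hx, mul_one]

lemma sum_pair_snd (hx : ∑ a, x a = 1) :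
    ∑ p : A × A, x p.1 * x p.2 * f p.1 = ∑ a, x a * f a := by
  exact sum_pair_fst f hx

lemma sum_pair_snd' (hx : ∑ a, x a = 1) :
    ∑ p : A × A, x p.1 * x p.2 * g p.2 = ∑ a, x a * g a := by
  rw [Fintype.sum_prod_type]
  have : ∀ a, ∑ a', x a * x a' * g a' = x a * ∑ a', x a' * g a' := by
    intro a; rw [Finset.mul_sum]; exact Finset.sum_congr rfl fun a' _ => by ring
  simp_rw [this]
  rw [← Finset.sum_mul, hx, one_mul]

lemma sum_pair_const (hx : ∑ a, x a = 1) (c : ℝ) :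
    ∑ p : A × A, x p.1 * x p.2 * c = c := by
  have := sum_pair_fst (x := x) (fun _ => c) hx
  rw [this, ← Finset.sum_mul, hx, one_mul]

end PairSums

lemma sum_pair_one {A : Type} [Fintype A] {x : A → ℝ} (hx : ∑ a, x a = 1) :
    ∑ p : A × A, x p.1 * x p.2 = 1 := by
  simpa using sum_pair_const (x := x) hx 1

lemma IsVal.sq {I : Set ℝ} {u : ℝ → ℝ} (h : IsVal I u)
    (hu : ∀ z ∈ I, u z ∈ Set.Icc (0:ℝ) 1) : IsVal I (fun z => u z * u z) := by
  obtain ⟨A, B, iA, iB, hA, hB, G, hdeg, hval⟩ := h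
  refine ⟨Bool × A × A, Bool × B × B, inferInstance, inferInstance,
    ⟨(true, hA.some, hA.some)⟩, ⟨(true, hB.some, hB.some)⟩,
    fun a b => if a.1 then (if b.1 then G a.2.1 b.2.1
        else G a.2.1 b.2.1 + G a.2.2 b.2.2 - C 1)
      else (if b.1 then 0 else G a.2.1 b.2.1),
    fun a b => ?_, fun z hz => ?_⟩
  · rcases a with ⟨ra, a1, a2⟩; rcases b with ⟨rb, b1, b2⟩
    cases ra <;> cases rb <;> simp only [if_true, if_false, Bool.false_eq_true]
    · exact hdeg _ _
    · exact Polynomial.degree_zero.le.trans (by norm_num)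
    · refine le_trans (Polynomial.degree_sub_le _ _) (max_le ?_ ?_)
      · exact le_trans (Polynomial.degree_add_le _ _) (max_le (hdeg _ _) (hdeg _ _))
      · exact Polynomial.degree_C_le.trans (by norm_num)
    · exact hdeg _ _
  · obtain ⟨⟨x, hx, hxg⟩, ⟨y, hy, hyg⟩⟩ := hval z hz
    obtain ⟨hu0, hu1⟩ := hu z hz
    set uz := u z with huz
    set e : A → B → ℝ := fun a b => (G a b).eval z with he
    constructor
    · refine ⟨fun r => (if r.1 then uz else 1 - uz) * (x r.2.1 * x r.2.2), ⟨fun r => ?_, ?_⟩,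
        fun b => ?_⟩
      · have : (0:ℝ) ≤ if r.1 then uz else 1 - uz := by split <;> linarith
        exact mul_nonneg this (mul_nonneg (hx.1 _) (hx.1 _))
      · rw [Fintype.sum_prod_type, Fintype.sum_bool]
        simp only [if_true, Bool.false_eq_true, if_false]
        rw [← Finset.mul_sum, ← Finset.mul_sum, sum_pair_one hx.2]
        ring
      · rcases b with ⟨rb, b1, b2⟩
        rw [Fintype.sum_prod_type, Fintype.sum_bool]
        cases rb
        · -- column (false, b1, b2): entries: r=true: e1+e2-1 ; r=false: e(a1,b1)
          simp only [if_true, Bool.false_eq_true, if_false, Polynomial.eval_sub,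
            Polynomial.eval_add, Polynomial.eval_one, Polynomial.eval_C]
          have k1 : ∑ p : A × A, uz * (x p.1 * x p.2) *
              ((G p.1 b1).eval z + (G p.2 b2).eval z - 1)
              = uz * ((∑ a, x a * e a b1) + (∑ a, x a * e a b2) - 1) := by
            have : ∀ p : A × A, uz * (x p.1 * x p.2) *
                ((G p.1 b1).eval z + (G p.2 b2).eval z - 1)
                = uz * (x p.1 * x p.2 * e p.1 b1) + uz * (x p.1 * x p.2 * e p.2 b2)
                  - uz * (x p.1 * x p.2 * 1) := fun p => by simp only [he]; ring
            simp_rw [this]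
            rw [Finset.sum_sub_distrib, Finset.sum_add_distrib, ← Finset.mul_sum,
              ← Finset.mul_sum, ← Finset.mul_sum]
            rw [sum_pair_fst (fun a => e a b1) hx.2, sum_pair_snd' (fun a => e a b2) hx.2, sum_pair_const hx.2]
            ring
          have k2 : ∑ p : A × A, (1 - uz) * (x p.1 * x p.2) * (G p.1 b1).eval z
              = (1 - uz) * ∑ a, x a * e a b1 := by
            have : ∀ p : A × A, (1 - uz) * (x p.1 * x p.2) * (G p.1 b1).eval z
                = (1 - uz) * (x p.1 * x p.2 * e p.1 b1) := fun p => by simp only [he]; ring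
            simp_rw [this]
            rw [← Finset.mul_sum, sum_pair_fst (fun a => e a b1) hx.2]
          rw [k1, k2]
          have h1 := hxg b1
          have h2 := hxg b2
          nlinarith [h1, h2]
        · -- column (true, b1, b2): entries: r=true: e(a1,b1) ; r=false: 0
          simp only [if_true, Bool.false_eq_true, if_false, Polynomial.eval_zero, mul_zero,
            Finset.sum_const_zero, add_zero]
          have k1 : ∑ p : A × A, uz * (x p.1 * x p.2) * (G p.1 b1).eval z
              = uz * ∑ a, x a * e a b1 := by
            have : ∀ p : A × A, uz * (x p.1 * x p.2) * (G p.1 b1).eval z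
                = uz * (x p.1 * x p.2 * e p.1 b1) := fun p => by simp only [he]; ring
            simp_rw [this]
            rw [← Finset.mul_sum, sum_pair_fst (fun a => e a b1) hx.2]
          rw [k1]
          have h1 := hxg b1
          nlinarith [h1]
    · refine ⟨fun c => (if c.1 then 1 - uz else uz) * (y c.2.1 * y c.2.2), ⟨fun c => ?_, ?_⟩,
        fun a => ?_⟩
      · have : (0:ℝ) ≤ if c.1 then 1 - uz else uz := by split <;> linarith
        exact mul_nonneg this (mul_nonneg (hy.1 _) (hy.1 _))
      · rw [Fintype.sum_prod_type, Fintype.sum_bool]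
        simp only [if_true, Bool.false_eq_true, if_false]
        rw [← Finset.mul_sum, ← Finset.mul_sum, sum_pair_one hy.2]
        ring
      · rcases a with ⟨ra, a1, a2⟩
        rw [Fintype.sum_prod_type, Fintype.sum_bool]
        cases ra
        · -- row (false, a1, a2): entries: c=true: 0 ; c=false: e(a1,b1)
          simp only [if_true, Bool.false_eq_true, if_false, Polynomial.eval_zero, zero_mul,
            Finset.sum_const_zero, zero_add]
          have k1 : ∑ q : B × B, (G a1 q.1).eval z * (uz * (y q.1 * y q.2))
              = uz * ∑ b, y b * (e a1 b) := by
            have : ∀ q : B × B, (G a1 q.1).eval z * (uz * (y q.1 * y q.2))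
                = uz * (y q.1 * y q.2 * e a1 q.1) := fun q => by simp only [he]; ring
            simp_rw [this]
            rw [← Finset.mul_sum, sum_pair_fst (fun b => e a1 b) hy.2]
          rw [k1]
          have h1 := hyg a1
          have h1' : ∑ b, y b * e a1 b ≤ uz := by
            rw [show ∑ b, y b * e a1 b = ∑ b, (G a1 b).eval z * y b from
              Finset.sum_congr rfl fun b _ => by simp only [he]; ring]
            exact h1
          nlinarith [h1']
        · -- row (true, a1, a2): c=true: e(a1,b1) ; c=false: e(a1,b1)+e(a2,b2)-1
          simp only [if_true, Bool.false_eq_true, if_false, Polynomial.eval_sub,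
            Polynomial.eval_add, Polynomial.eval_one, Polynomial.eval_C]
          have k1 : ∑ q : B × B, (G a1 q.1).eval z * ((1 - uz) * (y q.1 * y q.2))
              = (1 - uz) * ∑ b, y b * e a1 b := by
            have : ∀ q : B × B, (G a1 q.1).eval z * ((1 - uz) * (y q.1 * y q.2))
                = (1 - uz) * (y q.1 * y q.2 * e a1 q.1) := fun q => by simp only [he]; ring
            simp_rw [this]
            rw [← Finset.mul_sum, sum_pair_fst (fun b => e a1 b) hy.2]
          have k2 : ∑ q : B × B, ((G a1 q.1).eval z + (G a2 q.2).eval z - 1) *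
              (uz * (y q.1 * y q.2))
              = uz * ((∑ b, y b * e a1 b) + (∑ b, y b * e a2 b) - 1) := by
            have : ∀ q : B × B, ((G a1 q.1).eval z + (G a2 q.2).eval z - 1) *
                (uz * (y q.1 * y q.2))
                = uz * (y q.1 * y q.2 * e a1 q.1) + uz * (y q.1 * y q.2 * e a2 q.2)
                  - uz * (y q.1 * y q.2 * 1) := fun q => by simp only [he]; ring
            simp_rw [this]
            rw [Finset.sum_sub_distrib, Finset.sum_add_distrib, ← Finset.mul_sum,
              ← Finset.mul_sum, ← Finset.mul_sum]
            rw [sum_pair_fst (fun b => e a1 b) hy.2, sum_pair_snd' (fun b => e a2 b) hy.2, sum_pair_const hy.2]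
            ring
          rw [k1, k2]
          have ha1 : ∑ b, y b * e a1 b ≤ uz := by
            rw [show ∑ b, y b * e a1 b = ∑ b, (G a1 b).eval z * y b from
              Finset.sum_congr rfl fun b _ => by simp only [he]; ring]
            exact hyg a1
          have ha2 : ∑ b, y b * e a2 b ≤ uz := by
            rw [show ∑ b, y b * e a2 b = ∑ b, (G a2 b).eval z * y b from
              Finset.sum_congr rfl fun b _ => by simp only [he]; ring]
            exact hyg a2
          nlinarith [ha1, ha2]

lemma IsVal.recip_aux {I : Set ℝ} {u : ℝ → ℝ} (h : IsVal I u)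
    (hu : ∀ z ∈ I, 0 ≤ u z) {c : ℝ} (hc : 0 < c) :
    IsVal I (fun z => u z * c / (u z + c)) := by
  obtain ⟨A, B, iA, iB, hA, hB, G, hdeg, hval⟩ := h
  refine ⟨Bool × A, Bool × B, inferInstance, inferInstance,
    ⟨(true, hA.some)⟩, ⟨(true, hB.some)⟩,
    fun a b => if a.1 then (if b.1 then G a.2 b.2 else 0) else (if b.1 then 0 else C c),
    fun a b => ?_, fun z hz => ?_⟩
  · rcases a with ⟨ra, a⟩; rcases b with ⟨rb, b⟩
    cases ra <;> cases rb <;> simp only [if_true, if_false, Bool.false_eq_true]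
    · exact Polynomial.degree_C_le.trans (by norm_num)
    · exact Polynomial.degree_zero.le.trans (by norm_num)
    · exact Polynomial.degree_zero.le.trans (by norm_num)
    · exact hdeg _ _
  · obtain ⟨⟨x, hx, hxg⟩, ⟨y, hy, hyg⟩⟩ := hval z hz
    have hu0 := hu z hz
    set uz := u z with huz
    have hdpos : 0 < uz + c := by linarith
    set θ : ℝ := c / (uz + c) with hθ
    have hθ0 : 0 ≤ θ := by positivity
    have hθ1 : θ ≤ 1 := by rw [hθ, div_le_one hdpos]; linarith
    have htarget1 : θ * uz = uz * c / (uz + c) := by rw [hθ]; field_simp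
    have htarget2 : (1 - θ) * c = uz * c / (uz + c) := by
      rw [hθ]
      field_simp
      ring
    constructor
    · refine ⟨fun r => (if r.1 then θ else 1 - θ) * x r.2, ⟨fun r => ?_, ?_⟩, fun b => ?_⟩
      · have : (0:ℝ) ≤ if r.1 then θ else 1 - θ := by split <;> linarith
        exact mul_nonneg this (hx.1 _)
      · rw [Fintype.sum_prod_type, Fintype.sum_bool]
        simp only [if_true, Bool.false_eq_true, if_false]
        rw [← Finset.mul_sum, ← Finset.mul_sum, hx.2]
        ring
      · rcases b with ⟨rb, b⟩
        rw [Fintype.sum_prod_type, Fintype.sum_bool]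
        cases rb
        · simp only [if_true, Bool.false_eq_true, if_false, Polynomial.eval_zero,
            Polynomial.eval_C, mul_zero, Finset.sum_const_zero, zero_add]
          have k : ∑ a, (1 - θ) * x a * c = (1 - θ) * c := by
            have : ∀ a, (1 - θ) * x a * c = ((1 - θ) * c) * x a := fun a => by ring
            simp_rw [this]
            rw [← Finset.mul_sum, hx.2, mul_one]
          rw [k, htarget2]
        · simp only [if_true, Bool.false_eq_true, if_false, Polynomial.eval_zero,
            mul_zero, Finset.sum_const_zero, add_zero]
          have k : ∑ a, θ * x a * (G a b).eval z = θ * ∑ a, x a * (G a b).eval z := by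
            rw [Finset.mul_sum]; exact Finset.sum_congr rfl fun a _ => by ring
          rw [k, ← htarget1]
          exact mul_le_mul_of_nonneg_left (hxg b) hθ0
    · refine ⟨fun r => (if r.1 then θ else 1 - θ) * y r.2, ⟨fun r => ?_, ?_⟩, fun a => ?_⟩
      · have : (0:ℝ) ≤ if r.1 then θ else 1 - θ := by split <;> linarith
        exact mul_nonneg this (hy.1 _)
      · rw [Fintype.sum_prod_type, Fintype.sum_bool]
        simp only [if_true, Bool.false_eq_true, if_false]
        rw [← Finset.mul_sum, ← Finset.mul_sum, hy.2]
        ring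
      · rcases a with ⟨ra, a⟩
        rw [Fintype.sum_prod_type, Fintype.sum_bool]
        cases ra
        · simp only [if_true, Bool.false_eq_true, if_false, Polynomial.eval_zero,
            Polynomial.eval_C, zero_mul, Finset.sum_const_zero, zero_add]
          have k : ∑ b, c * ((1 - θ) * y b) = (1 - θ) * c := by
            have : ∀ b, c * ((1 - θ) * y b) = ((1 - θ) * c) * y b := fun b => by ring
            simp_rw [this]
            rw [← Finset.mul_sum, hy.2, mul_one]
          rw [k, htarget2]
        · simp only [if_true, Bool.false_eq_true, if_false, Polynomial.eval_zero,
            zero_mul, Finset.sum_const_zero, add_zero]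
          have k : ∑ b, (G a b).eval z * (θ * y b) = θ * ∑ b, (G a b).eval z * y b := by
            rw [Finset.mul_sum]; exact Finset.sum_congr rfl fun b _ => by ring
          rw [k, ← htarget1]
          calc θ * ∑ b, (G a b).eval z * y b ≤ θ * uz :=
                mul_le_mul_of_nonneg_left (hyg a) hθ0
            _ = θ * uz := rfl

lemma IsVal.mul {I : Set ℝ} {u w : ℝ → ℝ} (hu : IsVal I u) (hw : IsVal I w)
    {K : ℝ} (hK : 0 < K) (hub : ∀ z ∈ I, |u z| ≤ K) (hwb : ∀ z ∈ I, |w z| ≤ K) :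
    IsVal I (fun z => u z * w z) := by
  have h4K : (0:ℝ) ≤ 1 / (4 * K) := by positivity
  have hP : IsVal I (fun z => 1 / (4 * K) * (u z + w z + 2 * K)) :=
    ((hu.add hw).add (isVal_const I (2 * K))).smul h4K
  have hQ : IsVal I (fun z => 1 / (4 * K) * (u z + - w z + 2 * K)) :=
    ((hu.add hw.neg).add (isVal_const I (2 * K))).smul h4K
  have hPb : ∀ z ∈ I, (fun z => 1 / (4 * K) * (u z + w z + 2 * K)) z ∈ Set.Icc (0:ℝ) 1 := by
    intro z hz
    have h1 := abs_le.1 (hub z hz)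
    have h2 := abs_le.1 (hwb z hz)
    constructor
    · have : 0 ≤ u z + w z + 2 * K := by linarith [h1.1, h2.1]
      positivity
    · calc 1 / (4 * K) * (u z + w z + 2 * K) ≤ 1 / (4 * K) * (4 * K) :=
            mul_le_mul_of_nonneg_left (by linarith [h1.2, h2.2]) h4K
        _ = 1 := by field_simp
  have hQb : ∀ z ∈ I, (fun z => 1 / (4 * K) * (u z + - w z + 2 * K)) z ∈ Set.Icc (0:ℝ) 1 := by
    intro z hz
    have h1 := abs_le.1 (hub z hz)
    have h2 := abs_le.1 (hwb z hz)
    constructor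
    · have : 0 ≤ u z + - w z + 2 * K := by linarith [h1.1, h2.2]
      positivity
    · calc 1 / (4 * K) * (u z + - w z + 2 * K) ≤ 1 / (4 * K) * (4 * K) :=
            mul_le_mul_of_nonneg_left (by linarith [h1.2, h2.1]) h4K
        _ = 1 := by field_simp
  have hPsq := hP.sq hPb
  have hQsq := hQ.sq hQb
  have h4K2 : (0:ℝ) ≤ 4 * K ^ 2 := by positivity
  have h2K : (0:ℝ) ≤ 2 * K := by positivity
  have final := (hPsq.smul h4K2).add (((hQsq.smul h4K2).neg).add ((hw.smul h2K).neg))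
  refine final.congr fun z hz => ?_
  have hKne : K ≠ 0 := ne_of_gt hK
  show 4 * K ^ 2 * ((1 / (4 * K) * (u z + w z + 2 * K)) * (1 / (4 * K) * (u z + w z + 2 * K)))
    + (-(4 * K ^ 2 * ((1 / (4 * K) * (u z + - w z + 2 * K)) * (1 / (4 * K) * (u z + - w z + 2 * K))))
      + -(2 * K * w z)) = u z * w z
  field_simp
  ring


lemma isVal_monomial (α β : ℝ) (n : ℕ) (a : ℝ) :
    IsVal (Set.Icc α β) (fun z => a * z ^ n) := by
  induction n with
  | zero => simpa using isVal_const (Set.Icc α β) a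
  | succ n ih =>
    have hid : IsVal (Set.Icc α β) (fun z => z) := by
      have := isVal_linear (Set.Icc α β) 0 1
      exact this.congr fun z _ => by ring
    have hcont : ContinuousOn (fun z : ℝ => a * z ^ n) (Set.Icc α β) := by fun_prop
    obtain ⟨C1, hC1⟩ := (isCompact_Icc (a := α) (b := β)).exists_bound_of_continuousOn hcont
    set K : ℝ := |C1| + |α| + |β| + 1 with hK
    have hKpos : 0 < K := by positivity
    have hub : ∀ z ∈ Set.Icc α β, |a * z ^ n| ≤ K := by
      intro z hz
      have h := hC1 z hz
      rw [Real.norm_eq_abs] at h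
      have : |C1| ≤ K := by
        rw [hK]; have := abs_nonneg α; have := abs_nonneg β; linarith
      linarith [le_abs_self C1]
    have hwb : ∀ z ∈ Set.Icc α β, |z| ≤ K := by
      intro z hz
      have : |z| ≤ max |α| |β| := abs_le_max_abs_abs hz.1 hz.2
      have h1 : max |α| |β| ≤ |α| + |β| := max_le (by linarith [abs_nonneg β]) (by linarith [abs_nonneg α])
      have : |C1| ≥ 0 := abs_nonneg _
      linarith
    have := (ih.mul hid hKpos hub hwb)
    exact this.congr fun z _ => by ring

lemma isVal_poly (α β : ℝ) (P : Polynomial ℝ) :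
    IsVal (Set.Icc α β) (fun z => P.eval z) := by
  induction P using Polynomial.induction_on' with
  | add p q hp hq => exact (hp.add hq).congr fun z _ => by simp [Polynomial.eval_add]
  | monomial n a =>
    exact (isVal_monomial α β n a).congr fun z _ => by simp [Polynomial.eval_monomial]

/-- For every compact interval `I = [α, β]` with `α < β`, polynomials `Q`, `R`, and
`ε > 0`, there is a linear game whose value function agrees with
`z ↦ Q z / max (R z) ε` on `I`. -/
theorem rational_truncation_is_linear_game_value_on_interval
    (α β : ℝ) (hαβ : α < β) (Q R : Polynomial ℝ) (ε : ℝ) (hε : 0 < ε) :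
    ∃ (A B : Type) (iA : Fintype A) (iB : Fintype B), Nonempty A ∧ Nonempty B ∧
      ∃ G : A → B → Polynomial ℝ, (∀ a b, (G a b).degree ≤ 1) ∧
        ∀ z ∈ Set.Icc α β, (@matrixValue A B iA iB fun a b => (G a b).eval z) =
          Q.eval z / max (R.eval z) ε := by
  set I := Set.Icc α β with hI
  have hQv : IsVal I (fun z => Q.eval z) := isVal_poly α β Q
  have hRv : IsVal I (fun z => R.eval z) := isVal_poly α β R
  have hDv : IsVal I (fun z => max (R.eval z) ε) := hRv.max (isVal_const I ε)
  have hDmv : IsVal I (fun z => max (R.eval z) ε + -(ε / 2)) :=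
    hDv.add (isVal_const I (ε / 2)).neg
  have hDm_nonneg : ∀ z ∈ I, 0 ≤ max (R.eval z) ε + -(ε / 2) := by
    intro z _
    have : ε ≤ max (R.eval z) ε := le_max_right _ _
    linarith
  have hc2 : (0:ℝ) < ε / 2 := by linarith
  have hg : IsVal I (fun z => (max (R.eval z) ε + -(ε / 2)) * (ε / 2)
      / ((max (R.eval z) ε + -(ε / 2)) + ε / 2)) :=
    hDmv.recip_aux hDm_nonneg hc2
  have hinv : IsVal I (fun z => 1 / max (R.eval z) ε) := by
    have hstep : IsVal I (fun z => 1 / (ε / 2) ^ 2 * ((ε / 2) + -((max (R.eval z) ε + -(ε / 2)) * (ε / 2)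
        / ((max (R.eval z) ε + -(ε / 2)) + ε / 2)))) :=
      ((isVal_const I (ε / 2)).add hg.neg).smul (by positivity)
    refine hstep.congr fun z _ => ?_
    have hD : 0 < max (R.eval z) ε := lt_of_lt_of_le hε (le_max_right _ _)
    have hDne : max (R.eval z) ε ≠ 0 := ne_of_gt hD
    have hsum : (max (R.eval z) ε + -(ε / 2)) + ε / 2 = max (R.eval z) ε := by ring
    rw [hsum]
    field_simp
    ring
  -- bounds for the final product
  have hcontQ : ContinuousOn (fun z : ℝ => Q.eval z) I := by fun_prop
  obtain ⟨C1, hC1⟩ := (isCompact_Icc (a := α) (b := β)).exists_bound_of_continuousOn hcontQ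
  set K : ℝ := |C1| + 1 / ε + 1 with hK
  have hKpos : 0 < K := by positivity
  have hub : ∀ z ∈ I, |Q.eval z| ≤ K := by
    intro z hz
    have h := hC1 z hz
    rw [Real.norm_eq_abs] at h
    have h2 : (0:ℝ) ≤ 1 / ε := by positivity
    have := le_abs_self C1
    rw [hK]; linarith
  have hwb : ∀ z ∈ I, |1 / max (R.eval z) ε| ≤ K := by
    intro z _
    have hD : ε ≤ max (R.eval z) ε := le_max_right _ _
    have hDpos : 0 < max (R.eval z) ε := lt_of_lt_of_le hε hD
    have h1 : |1 / max (R.eval z) ε| = 1 / max (R.eval z) ε := abs_of_pos (by positivity)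
    have h2 : 1 / max (R.eval z) ε ≤ 1 / ε := by
      apply one_div_le_one_div_of_le hε hD
    have := abs_nonneg C1
    rw [hK, h1]; linarith
  have hfin : IsVal I (fun z => Q.eval z * (1 / max (R.eval z) ε)) :=
    hQv.mul hinv hKpos hub hwb
  have htarget : IsVal I (fun z => Q.eval z / max (R.eval z) ε) :=
    hfin.congr fun z _ => by rw [div_eq_mul_one_div]; ring
  obtain ⟨A, B, iA, iB, hA, hB, G, hdeg, hcert⟩ := htarget
  refine ⟨A, B, iA, iB, hA, hB, G, hdeg, fun z hz => ?_⟩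
  exact @matrixValue_eq_of_cert A B iA iB hA hB _ _ (hcert z hz)
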